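/- Let π be an optimal coupling for the Kantorovich problem between p1^{n+1} and p2^{n+1} on A^{n+1} with Cantor ground distance, and suppose the consistency conditions hold. Then for every word w of length n with p1^n(w) > p2^n(w): Σ_{w'≠w} Σ_{a1,a2∈A} π(w a1, w' a2) = p1^n(w) − p2^n(w) and Σ_{w'≠w} Σ_{a1,a2∈A} π(w' a1, w a2) = 0. -/

import Mathlib

/-- The Cantor distance on `n`-long words: `2^{-l}` where `l` is the (1-based)
index of the first position at which the words differ, and `0` if they are equal. -/
noncomputable def cantorDist {A : Type*} [DecidableEq A] {n : ℕ} (w1 w2 : Fin n → A) : ℝ :=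
  if h : w1 = w2 then 0
  else ((1 : ℝ) / 2) ^
    (((Finset.univ.filter fun k => w1 k ≠ w2 k).min'
      (by
        obtain ⟨k, hk⟩ := Function.ne_iff.mp h
        exact ⟨k, Finset.mem_filter.mpr ⟨Finset.mem_univ k, hk⟩⟩) : Fin n).1 + 1)

/-- A probability distribution on a finite type. -/
def IsDist {X : Type*} [Fintype X] (p : X → ℝ) : Prop :=
  (∀ x, 0 ≤ p x) ∧ ∑ x, p x = 1

/-- `π` is a coupling of `p` and `q`: a nonnegative joint distribution with marginals `p`, `q`. -/
def IsCoupling {X : Type*} [Fintype X] (π : X → X → ℝ) (p q : X → ℝ) : Prop :=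
  (∀ x y, 0 ≤ π x y) ∧ (∀ x, ∑ y, π x y = p x) ∧ (∀ y, ∑ x, π x y = q y)

/-- Transport cost of a plan `π` for ground cost `d`. -/
noncomputable def transportCost {X : Type*} [Fintype X] (d : X → X → ℝ) (π : X → X → ℝ) : ℝ :=
  ∑ x, ∑ y, d x y * π x y

/-- The Kantorovich (optimal transport) cost between `p` and `q` with ground cost `d`. -/
noncomputable def kantorovich {X : Type*} [Fintype X] (d : X → X → ℝ) (p q : X → ℝ) : ℝ :=
  sInf {c | ∃ π, IsCoupling π p q ∧ transportCost d π = c}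

section CD
variable {A : Type*} [DecidableEq A] {n : ℕ}

lemma cantorDist_self (x : Fin n → A) : cantorDist x x = 0 := by simp [cantorDist]

lemma cantorDist_nonneg (x y : Fin n → A) : 0 ≤ cantorDist x y := by
  unfold cantorDist; split
  · exact le_refl 0
  · positivity

lemma cantorDist_spec {x y : Fin n → A} (h : x ≠ y) :
    ∃ k : Fin n, cantorDist x y = ((1:ℝ)/2) ^ (k.1 + 1) ∧ x k ≠ y k ∧
      ∀ j : Fin n, j.1 < k.1 → x j = y j := by
  have hne : ((Finset.univ.filter fun k => x k ≠ y k)).Nonempty := by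
    obtain ⟨k, hk⟩ := Function.ne_iff.mp h
    exact ⟨k, Finset.mem_filter.mpr ⟨Finset.mem_univ k, hk⟩⟩
  refine ⟨(Finset.univ.filter fun k => x k ≠ y k).min' hne, ?_, ?_, ?_⟩
  · simp [cantorDist, h]
  · have := Finset.min'_mem _ hne
    exact (Finset.mem_filter.mp this).2
  · intro j hj
    by_contra hc
    have hjm : j ∈ Finset.univ.filter fun k => x k ≠ y k :=
      Finset.mem_filter.mpr ⟨Finset.mem_univ j, hc⟩
    have := Finset.min'_le _ j hjm
    exact absurd (Fin.lt_iff_val_lt_val.mpr hj) (not_lt.mpr this)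

lemma cantorDist_le_of_agree {x y : Fin n → A} {K : ℕ}
    (h : ∀ j : Fin n, j.1 < K → x j = y j) : cantorDist x y ≤ ((1:ℝ)/2) ^ (K + 1) := by
  by_cases hxy : x = y
  · rw [hxy, cantorDist_self]; positivity
  · obtain ⟨k, hk, hne, _⟩ := cantorDist_spec hxy
    rw [hk]
    apply pow_le_pow_of_le_one (by norm_num) (by norm_num)
    have : ¬ k.1 < K := fun hlt => hne (h k hlt)
    omega

lemma cantorDist_ge_of_diff {x y : Fin n → A} {K : ℕ} (j : Fin n)
    (hj : j.1 < K) (hne : x j ≠ y j) : ((1:ℝ)/2) ^ K ≤ cantorDist x y := by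
  have hxy : x ≠ y := fun h => hne (by rw [h])
  obtain ⟨k, hk, _, hagree⟩ := cantorDist_spec hxy
  rw [hk]
  apply pow_le_pow_of_le_one (by norm_num) (by norm_num)
  have : ¬ j.1 < k.1 := fun hlt => hne (hagree j hlt)
  omega

lemma cantorDist_ultra (x y z : Fin n → A) :
    cantorDist x z ≤ max (cantorDist x y) (cantorDist y z) := by
  by_cases hxz : x = z
  · rw [hxz, cantorDist_self]
    exact le_max_of_le_left (cantorDist_nonneg _ _)
  obtain ⟨k, hk, hne, hagree⟩ := cantorDist_spec hxz
  by_cases hxy : x k = y k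
  · have : y k ≠ z k := fun h => hne (hxy.trans h)
    refine le_max_of_le_right ?_
    rw [hk]
    exact cantorDist_ge_of_diff k (Nat.lt_succ_self _) this
  · refine le_max_of_le_left ?_
    rw [hk]
    exact cantorDist_ge_of_diff k (Nat.lt_succ_self _) hxy

end CD

section Sums
variable {A : Type*} [Fintype A] [DecidableEq A] {n : ℕ}

lemma sum_snoc_univ (h : (Fin (n+1) → A) → ℝ) :
    ∑ w' : Fin n → A, ∑ a : A, h (Fin.snoc w' a) = ∑ v, h v := by
  rw [← Fintype.sum_prod_type (f := fun p : (Fin n → A) × A => h (Fin.snoc p.1 p.2))]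
  exact Fintype.sum_equiv ((Equiv.prodComm (Fin n → A) A).trans (Fin.snocEquiv fun _ => A))
    (fun p => h (Fin.snoc p.1 p.2)) h (fun p => by simp [Fin.snocEquiv])

lemma sum_filter_ne_snoc (w : Fin n → A) (g : (Fin (n+1) → A) → ℝ) :
    ∑ w' ∈ Finset.univ.filter (fun w' : Fin n → A => w' ≠ w), ∑ a : A, g (Fin.snoc w' a)
      = ∑ v ∈ Finset.univ.filter (fun v : Fin (n+1) → A => Fin.init v ≠ w), g v := by
  rw [Finset.sum_filter, Finset.sum_filter]
  rw [← sum_snoc_univ (fun v => if Fin.init v ≠ w then g v else 0)]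
  refine Finset.sum_congr rfl fun w' _ => ?_
  by_cases h : w' = w <;> simp [h, Fin.init_snoc]

lemma sum_filter_eq_snoc (w : Fin n → A) (g : (Fin (n+1) → A) → ℝ) :
    ∑ a : A, g (Fin.snoc w a)
      = ∑ v ∈ Finset.univ.filter (fun v : Fin (n+1) → A => Fin.init v = w), g v := by
  rw [Finset.sum_filter]
  rw [← sum_snoc_univ (fun v => if Fin.init v = w then g v else 0)]
  rw [Finset.sum_eq_single w]
  · simp [Fin.init_snoc]
  · intro w' _ hne; simp [Fin.init_snoc, hne]
  · simp

lemma exists_pos_of_sum_pos {ι : Type*} (s : Finset ι) (f : ι → ℝ)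
    (h : 0 < ∑ x ∈ s, f x) : ∃ x ∈ s, 0 < f x := by
  by_contra hc
  push_neg at hc
  exact absurd (Finset.sum_nonpos hc) (not_le.mpr h)

end Sums

section Main
variable {A : Type*} [Fintype A] [DecidableEq A] {n : ℕ}

lemma sum_ind_eq {X : Type*} [Fintype X] [DecidableEq X] (d : X → X → ℝ) (a b : X) :
    ∑ x, ∑ y, d x y * (if x = a ∧ y = b then (1:ℝ) else 0) = d a b := by
  rw [Finset.sum_eq_single a]
  · rw [Finset.sum_eq_single b] <;> simp +contextual
  · intro x _ hx
    apply Finset.sum_eq_zero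
    intro y _
    simp [hx]
  · simp

lemma sum_row_ind {X : Type*} [Fintype X] [DecidableEq X] (a b : X) (x : X) :
    ∑ y, (if x = a ∧ y = b then (1:ℝ) else 0) = if x = a then 1 else 0 := by
  by_cases hx : x = a <;> simp [hx]

lemma sum_col_ind {X : Type*} [Fintype X] [DecidableEq X] (a b : X) (y : X) :
    ∑ x, (if x = a ∧ y = b then (1:ℝ) else 0) = if y = b then 1 else 0 := by
  by_cases hy : y = b <;> simp [hy, Finset.filter_eq']

-- distance facts on words of length n+1 relative to a prefix w
lemma dist_le_same_prefix {x y : Fin (n+1) → A} (h : Fin.init x = Fin.init y) :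
    cantorDist x y ≤ ((1:ℝ)/2) ^ (n + 1) := by
  apply cantorDist_le_of_agree
  intro j hj
  have : x j = Fin.init x ⟨j.1, hj⟩ := by simp [Fin.init]
  rw [this, h]
  simp [Fin.init]

lemma dist_ge_diff_prefix {x y : Fin (n+1) → A} (h : Fin.init x ≠ Fin.init y) :
    ((1:ℝ)/2) ^ n ≤ cantorDist x y := by
  obtain ⟨i, hi⟩ := Function.ne_iff.mp h
  exact cantorDist_ge_of_diff (Fin.castSucc i) i.2 hi

end Main


set_option maxHeartbeats 1000000 in
/-- Mass-flow identities of an optimal coupling across distinct `n`-prefixes: if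
`p1^n(w) > p2^n(w)` then the mass flowing out of the block of `w` is exactly
`p1^n(w) − p2^n(w)` and no mass flows into it. -/
theorem optimal_coupling_prefix_flow {A : Type*} [Fintype A] [DecidableEq A] {n : ℕ}
    (p1 p2 : (Fin n → A) → ℝ) (q1 q2 : (Fin (n + 1) → A) → ℝ)
    (hp1 : IsDist p1) (hp2 : IsDist p2) (hq1 : IsDist q1) (hq2 : IsDist q2)
    (hc1 : ∀ w : Fin n → A, p1 w = ∑ a : A, q1 (Fin.snoc w a))
    (hc2 : ∀ w : Fin n → A, p2 w = ∑ a : A, q2 (Fin.snoc w a))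
    (π : (Fin (n + 1) → A) → (Fin (n + 1) → A) → ℝ) (hπ : IsCoupling π q1 q2)
    (hopt : ∀ π', IsCoupling π' q1 q2 →
      transportCost cantorDist π ≤ transportCost cantorDist π')
    (w : Fin n → A) (hw : p2 w < p1 w) :
    (∑ w' ∈ Finset.univ.filter (fun w' : Fin n → A => w' ≠ w),
        ∑ a1 : A, ∑ a2 : A, π (Fin.snoc w a1) (Fin.snoc w' a2)) = p1 w - p2 w ∧
    (∑ w' ∈ Finset.univ.filter (fun w' : Fin n → A => w' ≠ w),
        ∑ a1 : A, ∑ a2 : A, π (Fin.snoc w' a1) (Fin.snoc w a2)) = 0 := by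
  obtain ⟨hπnn, hπ1, hπ2⟩ := hπ
  set B := Finset.univ.filter (fun v : Fin (n+1) → A => Fin.init v = w) with hB
  set C := Finset.univ.filter (fun v : Fin (n+1) → A => Fin.init v ≠ w) with hC
  -- identify the two sums in the goal as block sums
  have hOUT : (∑ w' ∈ Finset.univ.filter (fun w' : Fin n → A => w' ≠ w),
        ∑ a1 : A, ∑ a2 : A, π (Fin.snoc w a1) (Fin.snoc w' a2))
      = ∑ u ∈ B, ∑ v ∈ C, π u v := by
    calc (∑ w' ∈ Finset.univ.filter (fun w' : Fin n → A => w' ≠ w),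
        ∑ a1 : A, ∑ a2 : A, π (Fin.snoc w a1) (Fin.snoc w' a2))
        = ∑ a1 : A, ∑ w' ∈ Finset.univ.filter (fun w' : Fin n → A => w' ≠ w),
            ∑ a2 : A, π (Fin.snoc w a1) (Fin.snoc w' a2) := Finset.sum_comm
      _ = ∑ a1 : A, ∑ v ∈ C, π (Fin.snoc w a1) v := by
          rw [hC]; exact Finset.sum_congr rfl fun a1 _ => sum_filter_ne_snoc w (π (Fin.snoc w a1))
      _ = ∑ u ∈ B, ∑ v ∈ C, π u v := by rw [hB]; exact sum_filter_eq_snoc w (fun u => ∑ v ∈ C, π u v)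
  have hIN : (∑ w' ∈ Finset.univ.filter (fun w' : Fin n → A => w' ≠ w),
        ∑ a1 : A, ∑ a2 : A, π (Fin.snoc w' a1) (Fin.snoc w a2))
      = ∑ u ∈ C, ∑ v ∈ B, π u v := by
    calc (∑ w' ∈ Finset.univ.filter (fun w' : Fin n → A => w' ≠ w),
        ∑ a1 : A, ∑ a2 : A, π (Fin.snoc w' a1) (Fin.snoc w a2))
        = ∑ u ∈ C, ∑ a2 : A, π u (Fin.snoc w a2) := by
          rw [hC]; exact sum_filter_ne_snoc w (fun u => ∑ a2 : A, π u (Fin.snoc w a2))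
      _ = ∑ u ∈ C, ∑ v ∈ B, π u v := by
          refine Finset.sum_congr rfl fun u _ => ?_; rw [hB]; exact sum_filter_eq_snoc w (fun v => π u v)
  -- marginal identities on the block
  have hsplit : ∀ f : (Fin (n+1) → A) → ℝ, ∑ v ∈ B, f v + ∑ v ∈ C, f v = ∑ v, f v :=
    fun f => Finset.sum_filter_add_sum_filter_not Finset.univ _ f
  have key1 : (∑ u ∈ B, ∑ v ∈ B, π u v) + (∑ u ∈ B, ∑ v ∈ C, π u v) = p1 w := by
    rw [← Finset.sum_add_distrib]
    have : ∀ u ∈ B, (∑ v ∈ B, π u v) + (∑ v ∈ C, π u v) = q1 u := by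
      intro u _; rw [hsplit (π u), hπ1 u]
    rw [Finset.sum_congr rfl this, ← sum_filter_eq_snoc w q1, ← hc1 w]
  have key2 : (∑ u ∈ B, ∑ v ∈ B, π u v) + (∑ u ∈ C, ∑ v ∈ B, π u v) = p2 w := by
    have : ∀ v ∈ B, (∑ u ∈ B, π u v) + (∑ u ∈ C, π u v) = q2 v := by
      intro v _; rw [hsplit (fun u => π u v), hπ2 v]
    calc (∑ u ∈ B, ∑ v ∈ B, π u v) + (∑ u ∈ C, ∑ v ∈ B, π u v)
        = (∑ v ∈ B, ∑ u ∈ B, π u v) + (∑ v ∈ B, ∑ u ∈ C, π u v) := by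
          rw [Finset.sum_comm (s := B) (t := B), Finset.sum_comm (s := C) (t := B)]
      _ = ∑ v ∈ B, ((∑ u ∈ B, π u v) + (∑ u ∈ C, π u v)) := by rw [Finset.sum_add_distrib]
      _ = ∑ v ∈ B, q2 v := Finset.sum_congr rfl this
      _ = p2 w := by rw [← sum_filter_eq_snoc w q2, ← hc2 w]
  have hINnn : 0 ≤ ∑ u ∈ C, ∑ v ∈ B, π u v :=
    Finset.sum_nonneg fun u _ => Finset.sum_nonneg fun v _ => hπnn u v
  -- the inflow is zero, by optimality
  have hIN0 : (∑ u ∈ C, ∑ v ∈ B, π u v) = 0 := by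
    by_contra h0
    have hINpos : 0 < ∑ u ∈ C, ∑ v ∈ B, π u v := lt_of_le_of_ne hINnn (Ne.symm h0)
    have hOUTpos : 0 < ∑ u ∈ B, ∑ v ∈ C, π u v := by linarith
    obtain ⟨u, huC, hu⟩ := exists_pos_of_sum_pos _ _ hINpos
    obtain ⟨v, hvB, hπuv⟩ := exists_pos_of_sum_pos _ _ hu
    obtain ⟨u', hu'B, hu'⟩ := exists_pos_of_sum_pos _ _ hOUTpos
    obtain ⟨v', hv'C, hπu'v'⟩ := exists_pos_of_sum_pos _ _ hu'
    have hui : Fin.init u ≠ w := (Finset.mem_filter.mp huC).2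
    have hvi : Fin.init v = w := (Finset.mem_filter.mp hvB).2
    have hu'i : Fin.init u' = w := (Finset.mem_filter.mp hu'B).2
    have hv'i : Fin.init v' ≠ w := (Finset.mem_filter.mp hv'C).2
    have huu' : u ≠ u' := fun h => hui (by rw [h]; exact hu'i)
    have hvv' : v ≠ v' := fun h => hv'i (by rw [← h]; exact hvi)
    obtain ⟨ε, hεle1, hεle2, hεpos⟩ : ∃ ε, ε ≤ π u v ∧ ε ≤ π u' v' ∧ 0 < ε :=
      ⟨min (π u v) (π u' v'), min_le_left _ _, min_le_right _ _, lt_min hπuv hπu'v'⟩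
    set π' : (Fin (n+1) → A) → (Fin (n+1) → A) → ℝ := fun x y => π x y +
      ε * (((if x = u ∧ y = v' then 1 else 0) + (if x = u' ∧ y = v then 1 else 0))
        - ((if x = u ∧ y = v then 1 else 0) + (if x = u' ∧ y = v' then 1 else 0))) with hπ'def
    have hcoup : IsCoupling π' q1 q2 := by
      refine ⟨?_, ?_, ?_⟩
      · intro x y
        by_cases h1 : x = u ∧ y = v
        · have e1 : ¬(x = u ∧ y = v') := fun h => hvv' (h1.2.symm.trans h.2)
          have e2 : ¬(x = u' ∧ y = v) := fun h => huu' (h1.1.symm.trans h.1)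
          have e4 : ¬(x = u' ∧ y = v') := fun h => huu' (h1.1.symm.trans h.1)
          simp only [hπ'def]
          rw [if_pos h1, if_neg e1, if_neg e2, if_neg e4, h1.1, h1.2]
          linarith
        · by_cases h2 : x = u' ∧ y = v'
          · have e1 : ¬(x = u ∧ y = v') := fun h => huu' (h.1.symm.trans h2.1)
            have e2 : ¬(x = u' ∧ y = v) := fun h => hvv' (h.2.symm.trans h2.2)
            simp only [hπ'def]
            rw [if_pos h2, if_neg e1, if_neg e2, if_neg h1, h2.1, h2.2]
            linarith
          · simp only [hπ'def, if_neg h1, if_neg h2]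
            have h3 := hπnn x y
            split_ifs <;> nlinarith
      · intro x
        simp only [hπ'def]
        rw [Finset.sum_add_distrib, ← Finset.mul_sum, Finset.sum_sub_distrib,
          Finset.sum_add_distrib, Finset.sum_add_distrib, sum_row_ind, sum_row_ind,
          sum_row_ind, sum_row_ind, hπ1 x]
        ring
      · intro y
        simp only [hπ'def]
        rw [Finset.sum_add_distrib, ← Finset.mul_sum, Finset.sum_sub_distrib,
          Finset.sum_add_distrib, Finset.sum_add_distrib, sum_col_ind, sum_col_ind,
          sum_col_ind, sum_col_ind, hπ2 y]
        ring
    have hcost : transportCost cantorDist π' = transportCost cantorDist π +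
        ε * ((cantorDist u v' + cantorDist u' v) - (cantorDist u v + cantorDist u' v')) := by
      unfold transportCost
      have expand : ∀ x y : Fin (n+1) → A, cantorDist x y * π' x y =
          cantorDist x y * π x y
          + ε * (cantorDist x y * (if x = u ∧ y = v' then (1:ℝ) else 0))
          + ε * (cantorDist x y * (if x = u' ∧ y = v then (1:ℝ) else 0))
          - ε * (cantorDist x y * (if x = u ∧ y = v then (1:ℝ) else 0))
          - ε * (cantorDist x y * (if x = u' ∧ y = v' then (1:ℝ) else 0)) := by
        intro x y; simp only [hπ'def]; ring
      simp only [expand, Finset.sum_add_distrib, Finset.sum_sub_distrib, ← Finset.mul_sum]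
      rw [sum_ind_eq, sum_ind_eq, sum_ind_eq, sum_ind_eq]
      ring
    have d1 : ((1:ℝ)/2)^n ≤ cantorDist u v :=
      dist_ge_diff_prefix (by rw [hvi]; exact hui)
    have d2 : ((1:ℝ)/2)^n ≤ cantorDist u' v' :=
      dist_ge_diff_prefix (by rw [hu'i]; exact fun h => hv'i h.symm)
    have d3 : cantorDist u' v ≤ ((1:ℝ)/2)^(n+1) :=
      dist_le_same_prefix (hu'i.trans hvi.symm)
    have d4 : cantorDist v u' ≤ ((1:ℝ)/2)^(n+1) :=
      dist_le_same_prefix (hvi.trans hu'i.symm)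
    have hhalf : ((1:ℝ)/2)^(n+1) < ((1:ℝ)/2)^n :=
      pow_lt_pow_right_of_lt_one₀ (by norm_num) (by norm_num) (Nat.lt_succ_self n)
    have hu1 : cantorDist v v' ≤ max (cantorDist v u') (cantorDist u' v') :=
      cantorDist_ultra v u' v'
    have hu2 : cantorDist u v' ≤ max (cantorDist u v) (cantorDist v v') :=
      cantorDist_ultra u v v'
    have hvv'le : cantorDist v v' ≤ cantorDist u' v' := by
      rcases max_cases (cantorDist v u') (cantorDist u' v') with ⟨he, _⟩ | ⟨he, _⟩ <;>
        rw [he] at hu1 <;> linarith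
    have huv'le : cantorDist u v' ≤ max (cantorDist u v) (cantorDist u' v') := by
      rcases max_cases (cantorDist u v) (cantorDist v v') with ⟨he, h'⟩ | ⟨he, h'⟩ <;>
        rw [he] at hu2
      · exact le_max_of_le_left hu2
      · exact le_max_of_le_right (hu2.trans hvv'le)
    have hminmax := min_add_max (cantorDist u v) (cantorDist u' v')
    have hminge : ((1:ℝ)/2)^n ≤ min (cantorDist u v) (cantorDist u' v') := le_min d1 d2
    have hstrict : (cantorDist u v' + cantorDist u' v) -
        (cantorDist u v + cantorDist u' v') < 0 := by linarith
    have hlt : transportCost cantorDist π' < transportCost cantorDist π := by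
      have := mul_neg_of_pos_of_neg hεpos hstrict
      rw [hcost]; linarith
    exact absurd (hopt π' hcoup) (not_le.mpr hlt)
  constructor
  · rw [hOUT]; linarith
  · rw [hIN]; exact hIN0
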